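/- Let n ≥ 2 be an integer. Then the inequality (1/n) ∑_{j=1}^{n−1} 1/sin(jπ/n) < 4 holds if and only if n ≤ 472. -/

import Mathlib

open Real Finset

namespace PolygonSync




lemma nonneg_of_deriv {f f' : ℝ → ℝ} (hder : ∀ x, HasDerivAt f (f' x) x)
    (h0 : f 0 = 0) (hd : ∀ x, 0 ≤ x → 0 ≤ f' x) {t : ℝ} (ht : 0 ≤ t) : 0 ≤ f t := by
  have hdiff : Differentiable ℝ f := fun x => (hder x).differentiableAt
  have hmono : MonotoneOn f (Set.Ici 0) := by
    apply monotoneOn_of_deriv_nonneg (convex_Ici 0) hdiff.continuous.continuousOn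
      hdiff.differentiableOn
    intro x hx
    rw [(hder x).deriv]
    rw [interior_Ici] at hx
    exact hd x (le_of_lt hx)
  have := hmono (Set.self_mem_Ici) (Set.mem_Ici.2 ht) ht
  linarith [h0 ▸ this]

lemma cos_ge_2 {t : ℝ} (ht : 0 ≤ t) : 1 - t^2/2 ≤ Real.cos t := by
  have key : ∀ x : ℝ, HasDerivAt (fun y => Real.cos y - 1 + y^2/2)
      (-Real.sin x + (2:ℕ)*x^(2-1)/2) x := fun x =>
    ((Real.hasDerivAt_cos x).sub_const 1).add ((hasDerivAt_pow 2 x).div_const 2)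
  have h := nonneg_of_deriv key (by norm_num)
    (fun x hx => by have := Real.sin_le hx; push_cast; nlinarith) ht
  linarith

lemma sin_ge_3 {t : ℝ} (ht : 0 ≤ t) : t - t^3/6 ≤ Real.sin t := by
  have key : ∀ x : ℝ, HasDerivAt (fun y => Real.sin y - y + y^3/6)
      (Real.cos x - 1 + (3:ℕ)*x^(3-1)/6) x := fun x =>
    ((Real.hasDerivAt_sin x).sub (hasDerivAt_id x)).add ((hasDerivAt_pow 3 x).div_const 6)
  have h := nonneg_of_deriv key (by norm_num)
    (fun x hx => by have := cos_ge_2 hx; push_cast; nlinarith) ht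
  linarith

lemma cos_le_4 {t : ℝ} (ht : 0 ≤ t) : Real.cos t ≤ 1 - t^2/2 + t^4/24 := by
  have key : ∀ x : ℝ, HasDerivAt (fun y => 1 - y^2/2 + y^4/24 - Real.cos y)
      (0 - (2:ℕ)*x^(2-1)/2 + (4:ℕ)*x^(4-1)/24 - -Real.sin x) x := fun x =>
    (((hasDerivAt_const x (1:ℝ)).sub ((hasDerivAt_pow 2 x).div_const 2)).add
      ((hasDerivAt_pow 4 x).div_const 24)).sub (Real.hasDerivAt_cos x)
  have h := nonneg_of_deriv key (by norm_num)
    (fun x hx => by have := sin_ge_3 hx; push_cast; nlinarith) ht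
  linarith

lemma sin_le_5 {t : ℝ} (ht : 0 ≤ t) : Real.sin t ≤ t - t^3/6 + t^5/120 := by
  have key : ∀ x : ℝ, HasDerivAt (fun y => y - y^3/6 + y^5/120 - Real.sin y)
      (1 - (3:ℕ)*x^(3-1)/6 + (5:ℕ)*x^(5-1)/120 - Real.cos x) x := fun x =>
    (((hasDerivAt_id x).sub ((hasDerivAt_pow 3 x).div_const 6)).add
      ((hasDerivAt_pow 5 x).div_const 120)).sub (Real.hasDerivAt_sin x)
  have h := nonneg_of_deriv key (by norm_num)
    (fun x hx => by have := cos_le_4 hx; push_cast; nlinarith) ht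
  linarith

lemma cos_ge_6 {t : ℝ} (ht : 0 ≤ t) : 1 - t^2/2 + t^4/24 - t^6/720 ≤ Real.cos t := by
  have key : ∀ x : ℝ, HasDerivAt (fun y => Real.cos y - (1 - y^2/2 + y^4/24 - y^6/720))
      (-Real.sin x - (0 - (2:ℕ)*x^(2-1)/2 + (4:ℕ)*x^(4-1)/24 - (6:ℕ)*x^(6-1)/720)) x := fun x =>
    (Real.hasDerivAt_cos x).sub ((((hasDerivAt_const x (1:ℝ)).sub
      ((hasDerivAt_pow 2 x).div_const 2)).add ((hasDerivAt_pow 4 x).div_const 24)).sub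
      ((hasDerivAt_pow 6 x).div_const 720))
  have h := nonneg_of_deriv key (by norm_num)
    (fun x hx => by have := sin_le_5 hx; push_cast; nlinarith) ht
  linarith

lemma sin_ge_7 {t : ℝ} (ht : 0 ≤ t) : t - t^3/6 + t^5/120 - t^7/5040 ≤ Real.sin t := by
  have key : ∀ x : ℝ, HasDerivAt (fun y => Real.sin y - (y - y^3/6 + y^5/120 - y^7/5040))
      (Real.cos x - (1 - (3:ℕ)*x^(3-1)/6 + (5:ℕ)*x^(5-1)/120 - (7:ℕ)*x^(7-1)/5040)) x := fun x =>
    (Real.hasDerivAt_sin x).sub ((((hasDerivAt_id x).sub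
      ((hasDerivAt_pow 3 x).div_const 6)).add ((hasDerivAt_pow 5 x).div_const 120)).sub
      ((hasDerivAt_pow 7 x).div_const 5040))
  have h := nonneg_of_deriv key (by norm_num)
    (fun x hx => by have := cos_ge_6 hx; push_cast; nlinarith) ht
  linarith

lemma cos_le_8 {t : ℝ} (ht : 0 ≤ t) :
    Real.cos t ≤ 1 - t^2/2 + t^4/24 - t^6/720 + t^8/40320 := by
  have key : ∀ x : ℝ, HasDerivAt
      (fun y => 1 - y^2/2 + y^4/24 - y^6/720 + y^8/40320 - Real.cos y)
      (0 - (2:ℕ)*x^(2-1)/2 + (4:ℕ)*x^(4-1)/24 - (6:ℕ)*x^(6-1)/720 + (8:ℕ)*x^(8-1)/40320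
        - -Real.sin x) x := fun x =>
    (((((hasDerivAt_const x (1:ℝ)).sub ((hasDerivAt_pow 2 x).div_const 2)).add
      ((hasDerivAt_pow 4 x).div_const 24)).sub ((hasDerivAt_pow 6 x).div_const 720)).add
      ((hasDerivAt_pow 8 x).div_const 40320)).sub (Real.hasDerivAt_cos x)
  have h := nonneg_of_deriv key (by norm_num)
    (fun x hx => by have := sin_ge_7 hx; push_cast; nlinarith) ht
  linarith

lemma sin_le_9 {t : ℝ} (ht : 0 ≤ t) :
    Real.sin t ≤ t - t^3/6 + t^5/120 - t^7/5040 + t^9/362880 := by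
  have key : ∀ x : ℝ, HasDerivAt
      (fun y => y - y^3/6 + y^5/120 - y^7/5040 + y^9/362880 - Real.sin y)
      (1 - (3:ℕ)*x^(3-1)/6 + (5:ℕ)*x^(5-1)/120 - (7:ℕ)*x^(7-1)/5040 + (9:ℕ)*x^(9-1)/362880
        - Real.cos x) x := fun x =>
    (((((hasDerivAt_id x).sub ((hasDerivAt_pow 3 x).div_const 6)).add
      ((hasDerivAt_pow 5 x).div_const 120)).sub ((hasDerivAt_pow 7 x).div_const 5040)).add
      ((hasDerivAt_pow 9 x).div_const 362880)).sub (Real.hasDerivAt_sin x)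
  have h := nonneg_of_deriv key (by norm_num)
    (fun x hx => by have := cos_le_8 hx; push_cast; nlinarith) ht
  linarith

lemma cos_ge_10 {t : ℝ} (ht : 0 ≤ t) :
    1 - t^2/2 + t^4/24 - t^6/720 + t^8/40320 - t^10/3628800 ≤ Real.cos t := by
  have key : ∀ x : ℝ, HasDerivAt
      (fun y => Real.cos y - (1 - y^2/2 + y^4/24 - y^6/720 + y^8/40320 - y^10/3628800))
      (-Real.sin x - (0 - (2:ℕ)*x^(2-1)/2 + (4:ℕ)*x^(4-1)/24 - (6:ℕ)*x^(6-1)/720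
        + (8:ℕ)*x^(8-1)/40320 - (10:ℕ)*x^(10-1)/3628800)) x := fun x =>
    (Real.hasDerivAt_cos x).sub ((((((hasDerivAt_const x (1:ℝ)).sub
      ((hasDerivAt_pow 2 x).div_const 2)).add ((hasDerivAt_pow 4 x).div_const 24)).sub
      ((hasDerivAt_pow 6 x).div_const 720)).add ((hasDerivAt_pow 8 x).div_const 40320)).sub
      ((hasDerivAt_pow 10 x).div_const 3628800))
  have h := nonneg_of_deriv key (by norm_num)
    (fun x hx => by have := sin_le_9 hx; push_cast; nlinarith) ht
  linarith

lemma sin_ge_11 {t : ℝ} (ht : 0 ≤ t) :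
    t - t^3/6 + t^5/120 - t^7/5040 + t^9/362880 - t^11/39916800 ≤ Real.sin t := by
  have key : ∀ x : ℝ, HasDerivAt
      (fun y => Real.sin y - (y - y^3/6 + y^5/120 - y^7/5040 + y^9/362880 - y^11/39916800))
      (Real.cos x - (1 - (3:ℕ)*x^(3-1)/6 + (5:ℕ)*x^(5-1)/120 - (7:ℕ)*x^(7-1)/5040
        + (9:ℕ)*x^(9-1)/362880 - (11:ℕ)*x^(11-1)/39916800)) x := fun x =>
    (Real.hasDerivAt_sin x).sub ((((((hasDerivAt_id x).sub
      ((hasDerivAt_pow 3 x).div_const 6)).add ((hasDerivAt_pow 5 x).div_const 120)).sub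
      ((hasDerivAt_pow 7 x).div_const 5040)).add ((hasDerivAt_pow 9 x).div_const 362880)).sub
      ((hasDerivAt_pow 11 x).div_const 39916800))
  have h := nonneg_of_deriv key (by norm_num)
    (fun x hx => by have := cos_ge_10 hx; push_cast; nlinarith) ht
  linarith
lemma csc_lower {t : ℝ} (h0 : 0 < t) (h1 : t ≤ 1.5708) :
    1/t + t/6 + 7*t^3/360 + 31*t^5/15120 + 127*t^7/604800 ≤ 1 / Real.sin t := by
  have hπ : t < π := lt_of_le_of_lt (by norm_num at h1 ⊢; linarith) Real.pi_gt_d6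
  have hs : 0 < Real.sin t := Real.sin_pos_of_pos_of_lt_pi h0 hπ
  rw [le_div_iff₀ hs]
  have h9 := sin_le_9 h0.le
  have hP : (0:ℝ) < 1/t + t/6 + 7*t^3/360 + 31*t^5/15120 + 127*t^7/604800 := by positivity
  calc (1/t + t/6 + 7*t^3/360 + 31*t^5/15120 + 127*t^7/604800) * Real.sin t
      ≤ (1/t + t/6 + 7*t^3/360 + 31*t^5/15120 + 127*t^7/604800) *
        (t - t^3/6 + t^5/120 - t^7/5040 + t^9/362880) := by
        exact mul_le_mul_of_nonneg_left h9 hP.le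
    _ = 1 + t^10 * (-(29/1360800) + (3193/2286144000)*t^2 - (247/6858432000)*(t^2)^2
          + (127/219469824000)*(t^2)^3) := by
        field_simp
        ring
    _ ≤ 1 := by
        have hu : t^2 ≤ 2.468 := by nlinarith
        have hu0 : (0:ℝ) ≤ t^2 := sq_nonneg t
        have hu3 : (t^2)^3 ≤ 2.468^3 := by
          apply pow_le_pow_left₀ hu0 hu
        have hg : (-(29/1360800) + (3193/2286144000)*t^2 - (247/6858432000)*(t^2)^2
            + (127/219469824000)*(t^2)^3 : ℝ) ≤ 0 := by nlinarith
        nlinarith [pow_nonneg h0.le 10, mul_nonpos_of_nonneg_of_nonpos (pow_nonneg h0.le 10) hg]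

lemma csc_upper {t : ℝ} (h0 : 0 < t) (h1 : t ≤ 1.5708) :
    1 / Real.sin t ≤ 1/t + t/6 + 7*t^3/360 + 31*t^5/15120 + 127*t^7/604800 + t^9/20000 := by
  have hπ : t < π := lt_of_le_of_lt (by norm_num at h1 ⊢; linarith) Real.pi_gt_d6
  have hs : 0 < Real.sin t := Real.sin_pos_of_pos_of_lt_pi h0 hπ
  rw [div_le_iff₀ hs]
  have h11 := sin_ge_11 h0.le
  have hP : (0:ℝ) < 1/t + t/6 + 7*t^3/360 + 31*t^5/15120 + 127*t^7/604800 + t^9/20000 := by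
    positivity
  calc (1:ℝ) ≤ 1 + t^10 * ((12259/427680000) - (436363/62868960000)*t^2
          + (2868073/7544275200000)*(t^2)^2 - (566927/60354201600000)*(t^2)^3
          + (15997/120708403200000)*(t^2)^4 - (1/798336000000)*(t^2)^5) := by
        have hu : t^2 ≤ 2.468 := by nlinarith
        have hu0 : (0:ℝ) ≤ t^2 := sq_nonneg t
        have hu3 : (t^2)^3 ≤ 2.468^3 := pow_le_pow_left₀ hu0 hu 3
        have hu5 : (t^2)^5 ≤ 2.468^5 := pow_le_pow_left₀ hu0 hu 5
        have hg : (0:ℝ) ≤ (12259/427680000) - (436363/62868960000)*t^2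
            + (2868073/7544275200000)*(t^2)^2 - (566927/60354201600000)*(t^2)^3
            + (15997/120708403200000)*(t^2)^4 - (1/798336000000)*(t^2)^5 := by
          nlinarith [sq_nonneg (t^2), pow_nonneg hu0 2, pow_nonneg hu0 4]
        nlinarith [mul_nonneg (pow_nonneg h0.le 10) hg]
    _ = (1/t + t/6 + 7*t^3/360 + 31*t^5/15120 + 127*t^7/604800 + t^9/20000) *
          (t - t^3/6 + t^5/120 - t^7/5040 + t^9/362880 - t^11/39916800) := by
        field_simp
        ring
    _ ≤ (1/t + t/6 + 7*t^3/360 + 31*t^5/15120 + 127*t^7/604800 + t^9/20000) * Real.sin t := by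
        exact mul_le_mul_of_nonneg_left h11 hP.le

noncomputable def S (n : ℕ) : ℝ := ∑ j ∈ Finset.Ico 1 n, 1 / Real.sin ((j : ℝ) * Real.pi / n)

lemma arg_pos {j n : ℕ} (hj : j ∈ Finset.Ico 1 n) : (0:ℝ) < (j:ℝ) * π / n ∧ (j:ℝ) * π / n < π := by
  rw [Finset.mem_Ico] at hj
  have hj1 : (1:ℝ) ≤ (j:ℝ) := by exact_mod_cast hj.1
  have hjn : (j:ℝ) < n := by exact_mod_cast hj.2
  have hn0 : (0:ℝ) < n := lt_of_lt_of_le (by linarith) hjn.le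
  constructor
  · positivity
  · rw [div_lt_iff₀ hn0]; nlinarith [Real.pi_pos]

lemma csc_comb {x y a b : ℝ} (hx0 : 0 < x) (hxπ : x < π) (hy0 : 0 < y) (hyπ : y < π)
    (ha : 0 ≤ a) (hb : 0 ≤ b) (hab : a + b = 1) :
    1 / Real.sin (a*x + b*y) ≤ a * (1 / Real.sin x) + b * (1 / Real.sin y) := by
  have hu : 0 < Real.sin x := Real.sin_pos_of_pos_of_lt_pi hx0 hxπ
  have hv : 0 < Real.sin y := Real.sin_pos_of_pos_of_lt_pi hy0 hyπ
  have hcon := strictConcaveOn_sin_Icc.concaveOn.2 (x := x) (y := y)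
    ⟨hx0.le, hxπ.le⟩ ⟨hy0.le, hyπ.le⟩ ha hb hab
  simp only [smul_eq_mul] at hcon
  have hw : 0 < a * Real.sin x + b * Real.sin y := by
    rcases eq_or_lt_of_le ha with h | h
    · have hb1 : b = 1 := by linarith
      rw [← h, hb1]; simpa using hv
    · nlinarith [mul_pos h hu, mul_nonneg hb hv.le]
  have h1 : 1 / Real.sin (a*x + b*y) ≤ 1 / (a * Real.sin x + b * Real.sin y) :=
    one_div_le_one_div_of_le hw hcon
  refine h1.trans ?_
  rw [mul_one_div, mul_one_div, div_add_div _ _ hu.ne' hv.ne',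
    div_le_div_iff₀ hw (by positivity)]
  have hb1 : b = 1 - a := by linarith
  subst hb1
  nlinarith [mul_nonneg (mul_nonneg ha hb) (sq_nonneg (Real.sin x - Real.sin y)),
    mul_pos hu hv]

lemma S_nonneg (n : ℕ) : 0 ≤ S n := by
  apply Finset.sum_nonneg
  intro j hj
  obtain ⟨h0, hπ⟩ := arg_pos hj
  have := Real.sin_pos_of_pos_of_lt_pi h0 hπ
  positivity

lemma S_step {n : ℕ} (hn : 2 ≤ n) : (n:ℝ) * S n ≤ ((n:ℝ) - 1) * S (n+1) := by
  have hn0 : (0:ℝ) < n := by exact_mod_cast Nat.lt_of_lt_of_le (by norm_num) hn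
  have hn1 : (0:ℝ) < (n:ℝ)+1 := by linarith
  -- per-term bound
  have key : ∀ j ∈ Finset.Ico 1 n,
      (n:ℝ) * (1 / Real.sin ((j:ℝ) * π / n)) ≤
      ((n:ℝ) - j) * (1 / Real.sin ((j:ℝ) * π / (n+1)))
        + (j:ℝ) * (1 / Real.sin (((j:ℝ)+1) * π / (n+1))) := by
    intro j hj
    rw [Finset.mem_Ico] at hj
    have hj1 : (1:ℝ) ≤ (j:ℝ) := by exact_mod_cast hj.1
    have hjn : (j:ℝ) < n := by exact_mod_cast hj.2
    have hx0 : (0:ℝ) < (j:ℝ) * π / (n+1) := by positivity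
    have hxπ : (j:ℝ) * π / (n+1) < π := by
      rw [div_lt_iff₀ hn1]; nlinarith [Real.pi_pos]
    have hy0 : (0:ℝ) < ((j:ℝ)+1) * π / (n+1) := by positivity
    have hyπ : ((j:ℝ)+1) * π / (n+1) < π := by
      rw [div_lt_iff₀ hn1]; nlinarith [Real.pi_pos]
    have ha : (0:ℝ) ≤ ((n:ℝ) - j)/n := by
      apply div_nonneg (by linarith) hn0.le
    have hb : (0:ℝ) ≤ (j:ℝ)/n := by positivity
    have hab : ((n:ℝ) - j)/n + (j:ℝ)/n = 1 := by field_simp; ring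
    have hcomb := csc_comb hx0 hxπ hy0 hyπ ha hb hab
    have harg : (((n:ℝ) - j)/n) * ((j:ℝ) * π / (n+1)) + ((j:ℝ)/n) * (((j:ℝ)+1) * π / (n+1))
        = (j:ℝ) * π / n := by field_simp; ring
    rw [harg] at hcomb
    have := mul_le_mul_of_nonneg_left hcomb hn0.le
    calc (n:ℝ) * (1 / Real.sin ((j:ℝ) * π / n)) ≤
        (n:ℝ) * ((((n:ℝ) - j)/n) * (1 / Real.sin ((j:ℝ) * π / (n+1)))
          + ((j:ℝ)/n) * (1 / Real.sin (((j:ℝ)+1) * π / (n+1)))) := this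
      _ = ((n:ℝ) - j) * (1 / Real.sin ((j:ℝ) * π / (n+1)))
          + (j:ℝ) * (1 / Real.sin (((j:ℝ)+1) * π / (n+1))) := by
            have hc1 : (n:ℝ) * (((n:ℝ) - j)/n) = (n:ℝ) - j := by field_simp
            have hc2 : (n:ℝ) * ((j:ℝ)/n) = (j:ℝ) := by field_simp
            rw [mul_add, ← mul_assoc, ← mul_assoc, hc1, hc2]
  have h1 : (n:ℝ) * S n ≤ ∑ j ∈ Finset.Ico 1 n,
      (((n:ℝ) - j) * (1 / Real.sin ((j:ℝ) * π / (n+1)))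
        + (j:ℝ) * (1 / Real.sin (((j:ℝ)+1) * π / (n+1)))) := by
    rw [S, Finset.mul_sum]
    exact Finset.sum_le_sum key
  rw [Finset.sum_add_distrib] at h1
  -- first piece extends to Ico 1 (n+1)
  have e1 : ∑ j ∈ Finset.Ico 1 n, ((n:ℝ) - j) * (1 / Real.sin ((j:ℝ) * π / (n+1)))
      = ∑ j ∈ Finset.Ico 1 (n+1), ((n:ℝ) - j) * (1 / Real.sin ((j:ℝ) * π / (n+1))) := by
    rw [Finset.sum_Ico_succ_top (by omega : 1 ≤ n)]
    simp
  -- second piece reindexes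
  have e2 : ∑ j ∈ Finset.Ico 1 n, (j:ℝ) * (1 / Real.sin (((j:ℝ)+1) * π / (n+1)))
      = ∑ k ∈ Finset.Ico 2 (n+1), ((k:ℝ) - 1) * (1 / Real.sin ((k:ℝ) * π / (n+1))) := by
    apply Finset.sum_nbij' (i := fun j => j + 1) (j := fun k => k - 1)
    · intro a ha; rw [Finset.mem_Ico] at *; omega
    · intro a ha; rw [Finset.mem_Ico] at *; omega
    · intro a ha; omega
    · intro a ha; rw [Finset.mem_Ico] at ha; omega
    · intro a ha
      rw [Finset.mem_Ico] at ha
      push_cast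
      ring_nf
  have e3 : ∑ k ∈ Finset.Ico 2 (n+1), ((k:ℝ) - 1) * (1 / Real.sin ((k:ℝ) * π / (n+1)))
      = ∑ k ∈ Finset.Ico 1 (n+1), ((k:ℝ) - 1) * (1 / Real.sin ((k:ℝ) * π / (n+1))) := by
    rw [← Finset.sum_Ico_consecutive _ (by omega : 1 ≤ 2) (by omega : 2 ≤ n+1)]
    simp
  rw [e1, e2, e3, ← Finset.sum_add_distrib] at h1
  refine h1.trans (le_of_eq ?_)
  rw [S, Finset.mul_sum]
  apply Finset.sum_congr rfl
  intro j hj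
  push_cast
  ring


lemma S473_eq : S 473 = 2 * ∑ j ∈ Finset.Ico (1:ℕ) 237, 1 / Real.sin ((j : ℝ) * π / 473) := by
  rw [S]
  push_cast
  rw [← Finset.sum_Ico_consecutive _ (by omega : (1:ℕ) ≤ 237) (by omega : (237:ℕ) ≤ 473)]
  have hrefl : ∑ j ∈ Finset.Ico (237:ℕ) 473, 1 / Real.sin ((j : ℝ) * π / 473)
      = ∑ j ∈ Finset.Ico (1:ℕ) 237, 1 / Real.sin ((j : ℝ) * π / 473) := by
    apply Finset.sum_nbij' (i := fun j => 473 - j) (j := fun k => 473 - k)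
    · intro a ha; rw [Finset.mem_Ico] at *; omega
    · intro a ha; rw [Finset.mem_Ico] at *; omega
    · intro a ha; rw [Finset.mem_Ico] at ha; omega
    · intro a ha; rw [Finset.mem_Ico] at ha; omega
    · intro a ha
      rw [Finset.mem_Ico] at ha
      have hc : ((473 - a : ℕ) : ℝ) = 473 - (a : ℝ) := by
        push_cast [Nat.cast_sub (by omega : a ≤ 473)]; ring
      rw [hc, show ((473:ℝ) - a) * π / 473 = π - (a:ℝ) * π / 473 by ring, Real.sin_pi_sub]
  rw [hrefl]; ring

lemma S472_eq : S 472 = 2 * (∑ j ∈ Finset.Ico (1:ℕ) 236, 1 / Real.sin ((j : ℝ) * π / 472)) + 1 := by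
  rw [S]
  push_cast
  rw [← Finset.sum_Ico_consecutive _ (by omega : (1:ℕ) ≤ 236) (by omega : (236:ℕ) ≤ 472),
    ← Finset.sum_Ico_consecutive _ (by omega : (236:ℕ) ≤ 237) (by omega : (237:ℕ) ≤ 472)]
  have mid : ∑ j ∈ Finset.Ico (236:ℕ) 237, 1 / Real.sin ((j : ℝ) * π / 472) = 1 := by
    rw [Finset.sum_Ico_eq_sum_range]
    norm_num
    rw [show (236:ℝ) * π / 472 = π / 2 by ring, Real.sin_pi_div_two]
  have hrefl : ∑ j ∈ Finset.Ico (237:ℕ) 472, 1 / Real.sin ((j : ℝ) * π / 472)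
      = ∑ j ∈ Finset.Ico (1:ℕ) 236, 1 / Real.sin ((j : ℝ) * π / 472) := by
    apply Finset.sum_nbij' (i := fun j => 472 - j) (j := fun k => 472 - k)
    · intro a ha; rw [Finset.mem_Ico] at *; omega
    · intro a ha; rw [Finset.mem_Ico] at *; omega
    · intro a ha; rw [Finset.mem_Ico] at ha; omega
    · intro a ha; rw [Finset.mem_Ico] at ha; omega
    · intro a ha
      rw [Finset.mem_Ico] at ha
      have hc : ((472 - a : ℕ) : ℝ) = 472 - (a : ℝ) := by
        push_cast [Nat.cast_sub (by omega : a ≤ 472)]; ring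
      rw [hc, show ((472:ℝ) - a) * π / 472 = π - (a:ℝ) * π / 472 by ring, Real.sin_pi_sub]
  rw [mid, hrefl]; ring

set_option maxHeartbeats 1000000

lemma HH473 : (6.043164:ℝ) ≤ ∑ j ∈ Finset.Ico (1:ℕ) 237, 1/(j:ℝ) := by
  rw [Finset.sum_Ico_eq_sum_range]
  norm_num [Finset.sum_range_succ]

lemma A1_473 : ∑ j ∈ Finset.Ico (1:ℕ) 237, (j:ℝ) = 27966 := by
  rw [Finset.sum_Ico_eq_sum_range]
  norm_num [Finset.sum_range_succ]

lemma A3_473 : ∑ j ∈ Finset.Ico (1:ℕ) 237, (j:ℝ)^3 = 782097156 := by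
  rw [Finset.sum_Ico_eq_sum_range]
  norm_num [Finset.sum_range_succ]

lemma A5_473 : ∑ j ∈ Finset.Ico (1:ℕ) 237, (j:ℝ)^5 = 29162578053876 := by
  rw [Finset.sum_Ico_eq_sum_range]
  norm_num [Finset.sum_range_succ]

lemma A7_473 : ∑ j ∈ Finset.Ico (1:ℕ) 237, (j:ℝ)^7 = 1223322760268522796 := by
  rw [Finset.sum_Ico_eq_sum_range]
  norm_num [Finset.sum_range_succ]

lemma lower473 : (946:ℝ) ≤ ∑ j ∈ Finset.Ico (1:ℕ) 237, 1 / Real.sin ((j : ℝ) * π / 473) := by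
  have hπ1 : (3.141592:ℝ) < π := Real.pi_gt_d6
  have hπ2 : π < 3.141593 := Real.pi_lt_d6
  have hπ0 : (0:ℝ) < π := Real.pi_pos
  have key : ∀ j ∈ Finset.Ico (1:ℕ) 237,
      (473/π) * (1/(j:ℝ)) + (π/2838) * (j:ℝ) + ((7/360)*(π/473)^3) * (j:ℝ)^3
        + ((31/15120)*(π/473)^5) * (j:ℝ)^5 + ((127/604800)*(π/473)^7) * (j:ℝ)^7
      ≤ 1 / Real.sin ((j : ℝ) * π / 473) := by
    intro j hj
    rw [Finset.mem_Ico] at hj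
    have hj1 : (1:ℝ) ≤ (j:ℝ) := by exact_mod_cast hj.1
    have hj2 : (j:ℝ) ≤ 236 := by exact_mod_cast Nat.lt_succ_iff.mp hj.2
    have ht0 : (0:ℝ) < (j:ℝ) * π / 473 := by positivity
    have ht1 : (j:ℝ) * π / 473 ≤ 1.5708 := by nlinarith
    have h := csc_lower ht0 ht1
    have heq : 1/((j:ℝ) * π / 473) + ((j:ℝ) * π / 473)/6 + 7*((j:ℝ) * π / 473)^3/360
        + 31*((j:ℝ) * π / 473)^5/15120 + 127*((j:ℝ) * π / 473)^7/604800
        = (473/π) * (1/(j:ℝ)) + (π/2838) * (j:ℝ) + ((7/360)*(π/473)^3) * (j:ℝ)^3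
        + ((31/15120)*(π/473)^5) * (j:ℝ)^5 + ((127/604800)*(π/473)^7) * (j:ℝ)^7 := by
      have hj0 : (j:ℝ) ≠ 0 := by linarith
      field_simp
      ring
    rw [heq] at h
    exact h
  have hsum := Finset.sum_le_sum key
  rw [Finset.sum_add_distrib, Finset.sum_add_distrib, Finset.sum_add_distrib,
    Finset.sum_add_distrib, ← Finset.mul_sum, ← Finset.mul_sum, ← Finset.mul_sum,
    ← Finset.mul_sum, ← Finset.mul_sum, A1_473, A3_473, A5_473, A7_473] at hsum
  refine le_trans ?_ hsum
  have hHH := HH473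
  have t1 : (473/3.141593) * (6.043164:ℝ) ≤ (473/π) * ∑ j ∈ Finset.Ico (1:ℕ) 237, 1/(j:ℝ) := by
    apply mul_le_mul _ hHH (by norm_num) (by positivity)
    apply div_le_div_of_nonneg_left (by norm_num) hπ0 hπ2.le
  have t2 : (3.141592/2838) * (27966:ℝ) ≤ (π/2838) * 27966 := by
    apply mul_le_mul_of_nonneg_right _ (by norm_num)
    linarith
  have t3 : ((7/360)*(3.141592/473)^3) * (782097156:ℝ) ≤ ((7/360)*(π/473)^3) * 782097156 := by
    apply mul_le_mul_of_nonneg_right _ (by norm_num)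
    have : (3.141592/473:ℝ)^3 ≤ (π/473)^3 := by gcongr
    nlinarith
  have t5 : ((31/15120)*(3.141592/473)^5) * (29162578053876:ℝ)
      ≤ ((31/15120)*(π/473)^5) * 29162578053876 := by
    apply mul_le_mul_of_nonneg_right _ (by norm_num)
    have : (3.141592/473:ℝ)^5 ≤ (π/473)^5 := by gcongr
    nlinarith
  have t7 : ((127/604800)*(3.141592/473)^7) * (1223322760268522796:ℝ)
      ≤ ((127/604800)*(π/473)^7) * 1223322760268522796 := by
    apply mul_le_mul_of_nonneg_right _ (by norm_num)
    have : (3.141592/473:ℝ)^7 ≤ (π/473)^7 := by gcongr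
    nlinarith
  have final : (946:ℝ) ≤ (473/3.141593) * 6.043164 + (3.141592/2838) * 27966
      + ((7/360)*(3.141592/473)^3) * 782097156
      + ((31/15120)*(3.141592/473)^5) * 29162578053876
      + ((127/604800)*(3.141592/473)^7) * 1223322760268522796 := by
    norm_num
  linarith

set_option maxHeartbeats 1000000

lemma HH472 : ∑ j ∈ Finset.Ico (1:ℕ) 236, 1/(j:ℝ) ≤ 6.038928 := by
  rw [Finset.sum_Ico_eq_sum_range]
  norm_num [Finset.sum_range_succ]

lemma A1_472 : ∑ j ∈ Finset.Ico (1:ℕ) 236, (j:ℝ) = 27730 := by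
  rw [Finset.sum_Ico_eq_sum_range]; norm_num [Finset.sum_range_succ]

lemma A3_472 : ∑ j ∈ Finset.Ico (1:ℕ) 236, (j:ℝ)^3 = 768952900 := by
  rw [Finset.sum_Ico_eq_sum_range]; norm_num [Finset.sum_range_succ]

lemma A5_472 : ∑ j ∈ Finset.Ico (1:ℕ) 236, (j:ℝ)^5 = 28430495571700 := by
  rw [Finset.sum_Ico_eq_sum_range]; norm_num [Finset.sum_range_succ]

lemma A7_472 : ∑ j ∈ Finset.Ico (1:ℕ) 236, (j:ℝ)^7 = 1182548694341248300 := by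
  rw [Finset.sum_Ico_eq_sum_range]; norm_num [Finset.sum_range_succ]

lemma A9_472 : ∑ j ∈ Finset.Ico (1:ℕ) 236, (j:ℝ)^9 = 52466216771685248149060 := by
  rw [Finset.sum_Ico_eq_sum_range]; norm_num [Finset.sum_range_succ]

lemma upper472 : ∑ j ∈ Finset.Ico (1:ℕ) 236, 1 / Real.sin ((j : ℝ) * π / 472) ≤ 943.45 := by
  have hπ1 : (3.141592:ℝ) < π := Real.pi_gt_d6
  have hπ2 : π < 3.141593 := Real.pi_lt_d6
  have hπ0 : (0:ℝ) < π := Real.pi_pos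
  have key : ∀ j ∈ Finset.Ico (1:ℕ) 236,
      1 / Real.sin ((j : ℝ) * π / 472)
      ≤ (472/π) * (1/(j:ℝ)) + (π/2832) * (j:ℝ) + ((7/360)*(π/472)^3) * (j:ℝ)^3
        + ((31/15120)*(π/472)^5) * (j:ℝ)^5 + ((127/604800)*(π/472)^7) * (j:ℝ)^7
        + ((1/20000)*(π/472)^9) * (j:ℝ)^9 := by
    intro j hj
    rw [Finset.mem_Ico] at hj
    have hj1 : (1:ℝ) ≤ (j:ℝ) := by exact_mod_cast hj.1
    have hj2 : (j:ℝ) ≤ 235 := by exact_mod_cast Nat.lt_succ_iff.mp hj.2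
    have ht0 : (0:ℝ) < (j:ℝ) * π / 472 := by positivity
    have ht1 : (j:ℝ) * π / 472 ≤ 1.5708 := by nlinarith
    have h := csc_upper ht0 ht1
    have heq : 1/((j:ℝ) * π / 472) + ((j:ℝ) * π / 472)/6 + 7*((j:ℝ) * π / 472)^3/360
        + 31*((j:ℝ) * π / 472)^5/15120 + 127*((j:ℝ) * π / 472)^7/604800
        + ((j:ℝ) * π / 472)^9/20000
        = (472/π) * (1/(j:ℝ)) + (π/2832) * (j:ℝ) + ((7/360)*(π/472)^3) * (j:ℝ)^3
        + ((31/15120)*(π/472)^5) * (j:ℝ)^5 + ((127/604800)*(π/472)^7) * (j:ℝ)^7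
        + ((1/20000)*(π/472)^9) * (j:ℝ)^9 := by
      have hj0 : (j:ℝ) ≠ 0 := by linarith
      field_simp
      ring
    rw [heq] at h
    exact h
  have hsum := Finset.sum_le_sum key
  rw [Finset.sum_add_distrib, Finset.sum_add_distrib, Finset.sum_add_distrib,
    Finset.sum_add_distrib, Finset.sum_add_distrib, ← Finset.mul_sum, ← Finset.mul_sum,
    ← Finset.mul_sum, ← Finset.mul_sum, ← Finset.mul_sum, ← Finset.mul_sum,
    A1_472, A3_472, A5_472, A7_472, A9_472] at hsum
  refine hsum.trans ?_
  have hHH := HH472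
  have hHH0 : (0:ℝ) ≤ ∑ j ∈ Finset.Ico (1:ℕ) 236, 1/(j:ℝ) := by positivity
  have t1 : (472/π) * ∑ j ∈ Finset.Ico (1:ℕ) 236, 1/(j:ℝ)
      ≤ (472/3.141592) * (6.038928:ℝ) := by
    apply mul_le_mul _ hHH hHH0 (by norm_num)
    apply div_le_div_of_nonneg_left (by norm_num) (by norm_num) hπ1.le
  have t2 : (π/2832) * (27730:ℝ) ≤ (3.141593/2832) * 27730 := by
    apply mul_le_mul_of_nonneg_right _ (by norm_num)
    linarith
  have t3 : ((7/360)*(π/472)^3) * (768952900:ℝ)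
      ≤ ((7/360)*(3.141593/472)^3) * 768952900 := by
    apply mul_le_mul_of_nonneg_right _ (by norm_num)
    have : (π/472:ℝ)^3 ≤ (3.141593/472)^3 := by gcongr
    nlinarith
  have t5 : ((31/15120)*(π/472)^5) * (28430495571700:ℝ)
      ≤ ((31/15120)*(3.141593/472)^5) * 28430495571700 := by
    apply mul_le_mul_of_nonneg_right _ (by norm_num)
    have : (π/472:ℝ)^5 ≤ (3.141593/472)^5 := by gcongr
    nlinarith
  have t7 : ((127/604800)*(π/472)^7) * (1182548694341248300:ℝ)
      ≤ ((127/604800)*(3.141593/472)^7) * 1182548694341248300 := by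
    apply mul_le_mul_of_nonneg_right _ (by norm_num)
    have : (π/472:ℝ)^7 ≤ (3.141593/472)^7 := by gcongr
    nlinarith
  have t9 : ((1/20000)*(π/472)^9) * (52466216771685248149060:ℝ)
      ≤ ((1/20000)*(3.141593/472)^9) * 52466216771685248149060 := by
    apply mul_le_mul_of_nonneg_right _ (by norm_num)
    have : (π/472:ℝ)^9 ≤ (3.141593/472)^9 := by gcongr
    nlinarith
  have final : (472/3.141592) * (6.038928:ℝ) + (3.141593/2832) * 27730
      + ((7/360)*(3.141593/472)^3) * 768952900
      + ((31/15120)*(3.141593/472)^5) * 28430495571700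
      + ((127/604800)*(3.141593/472)^7) * 1182548694341248300
      + ((1/20000)*(3.141593/472)^9) * 52466216771685248149060 ≤ 943.45 := by
    norm_num
  linarith


lemma aseq_step {n : ℕ} (hn : 2 ≤ n) :
    (1/(n:ℝ)) * S n ≤ (1/((n+1:ℕ):ℝ)) * S (n+1) := by
  have hn0 : (0:ℝ) < n := by exact_mod_cast Nat.lt_of_lt_of_le (by norm_num) hn
  push_cast
  rw [one_div_mul_eq_div, one_div_mul_eq_div, div_le_div_iff₀ hn0 (by linarith)]
  have H : (n:ℝ) * (S n * ((n:ℝ)+1)) ≤ (n:ℝ) * (S (n+1) * n) := by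
    nlinarith [mul_le_mul_of_nonneg_left (S_step hn) (by positivity : (0:ℝ) ≤ (n:ℝ)+1),
      S_nonneg (n+1)]
  exact le_of_mul_le_mul_left H hn0

lemma aseq_mono {m k : ℕ} (h2 : 2 ≤ m) (hmk : m ≤ k) :
    (1/(m:ℝ)) * S m ≤ (1/(k:ℝ)) * S k := by
  induction k, hmk using Nat.le_induction with
  | base => exact le_refl _
  | succ k hk ih => exact ih.trans (aseq_step (h2.trans hk))

lemma main_lt (n : ℕ) (hn : 2 ≤ n) (h : n ≤ 472) : (1/(n:ℝ)) * S n < 4 := by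
  have hm := aseq_mono hn h
  have hS : S 472 < 1887.91 := by
    rw [S472_eq]; linarith [upper472]
  have : (1/((472:ℕ):ℝ)) * S 472 < 4 := by
    push_cast
    nlinarith
  linarith
 
lemma main_ge (n : ℕ) (h : 473 ≤ n) : (4:ℝ) ≤ (1/(n:ℝ)) * S n := by
  have hm := aseq_mono (by norm_num : 2 ≤ 473) h
  have hS : (1892:ℝ) ≤ S 473 := by
    rw [S473_eq]; linarith [lower473]
  have : (4:ℝ) ≤ (1/((473:ℕ):ℝ)) * S 473 := by
    push_cast
    nlinarith
  linarith

end PolygonSync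

/-- The inequality `(1/n) ∑_{j=1}^{n−1} 1/sin(jπ/n) < 4` holds if and only
if `n ≤ 472`. -/
theorem polygon_sync_inequality_iff_le_472
    (n : ℕ) (hn : 2 ≤ n) :
    ((1 : ℝ) / n) * ∑ j ∈ Finset.Ico 1 n, 1 / Real.sin ((j : ℝ) * Real.pi / n) < 4 ↔
      n ≤ 472 := by
  have hgoal : ((1 : ℝ) / n) * ∑ j ∈ Finset.Ico 1 n, 1 / Real.sin ((j : ℝ) * Real.pi / n)
      = (1/(n:ℝ)) * PolygonSync.S n := rfl
  rw [hgoal]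
  constructor
  · intro h
    by_contra hc
    push_neg at hc
    exact absurd h (not_lt.mpr (PolygonSync.main_ge n hc))
  · intro h
    exact PolygonSync.main_lt n hn h
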